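/- Let U_1,…,U_N ∈ SL(n,ℂ) and suppose U_N U_1 ⋯ U_{N−1} = Q Λ Q^{−1} with Λ = diag(μ_1,…,μ_n) and det Q = 1. Define V_k = (U_k ⋯ U_{N−1}) Q (ΛΛ†)^{−(N−k)/(2N)} for k = 1,…,N−1 and V_N = Q. Then the gauge-transformed links Ũ_k = V_k^{−1} U_k V_{k+1} (with V_{N+1} = V_1) satisfy Ũ_k = (ΛΛ†)^{1/(2N)} for k = 1,…,N−1 and Ũ_N = Λ (ΛΛ†)^{−(N−1)/(2N)}; in particular each Ũ_k is diagonal. -/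

import Mathlib

open Matrix

theorem optimal_gauge_cooling_diagonal (n N : ℕ) (hN : 0 < N) [NeZero N]
    (U : Fin N → Matrix (Fin n) (Fin n) ℂ) (hU : ∀ k, (U k).det = 1)
    (μ : Fin n → ℂ) (Q : Matrix (Fin n) (Fin n) ℂ) (hQ : Q.det = 1)
    -- `W k` is the partial product `U k * U (k+1) * ⋯ * U (N-2)`, with `W (N-1) = 1`:
    (W : ℕ → Matrix (Fin n) (Fin n) ℂ)
    (hW1 : W (N - 1) = 1)
    (hW2 : ∀ k (hk : k < N - 1), W k = U ⟨k, by omega⟩ * W (k + 1))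
    -- diagonalization `U_N U_1 ⋯ U_{N-1} = Q Λ Q⁻¹`:
    (hdiag : U ⟨N - 1, by omega⟩ * W 0 = Q * Matrix.diagonal μ * Q⁻¹)
    -- `Dp α` is the entrywise real power `(Λ Λ†)^α`:
    (Dp : ℝ → Matrix (Fin n) (Fin n) ℂ)
    (hDp : ∀ α, Dp α = Matrix.diagonal (fun j => (((‖μ j‖ ^ 2) ^ α : ℝ) : ℂ)))
    -- the gauge transform:
    (V : Fin N → Matrix (Fin n) (Fin n) ℂ)
    (hV : ∀ (k : Fin N) (hk : (k : ℕ) < N - 1),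
      V k = W k * Q * Dp (-(((N : ℝ) - 1 - (k : ℕ)) / (2 * N))))
    (hVN : V ⟨N - 1, by omega⟩ = Q) :
    ∀ k : Fin N, (V k)⁻¹ * U k * V (k + 1) =
      if (k : ℕ) < N - 1 then Dp (1 / (2 * N))
      else Matrix.diagonal μ * Dp (-(((N : ℝ) - 1) / (2 * N))) := by
  have hNR : (N : ℝ) ≠ 0 := Nat.cast_ne_zero.mpr hN.ne'
  -- determinant of partial products
  have hWdet : ∀ d k, k + d = N - 1 → (W k).det = 1 := by
    intro d
    induction d with
    | zero =>
      intro k hk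
      simp only [Nat.add_zero] at hk
      rw [hk, hW1, Matrix.det_one]
    | succ d ih =>
      intro k hk
      have hklt : k < N - 1 := by omega
      rw [hW2 k hklt, Matrix.det_mul, hU, ih (k + 1) (by omega), one_mul]
  have hW0 : (W 0).det = 1 := hWdet (N - 1) 0 (by omega)
  -- all eigenvalues nonzero
  have hdetμ : (Matrix.diagonal μ).det = 1 := by
    have h1 : (U ⟨N - 1, by omega⟩ * W 0).det = 1 := by
      rw [Matrix.det_mul, hU, hW0, one_mul]
    rw [hdiag, Matrix.det_mul, Matrix.det_mul, Matrix.det_nonsing_inv, hQ] at h1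
    simpa using h1
  have hμ : ∀ j, μ j ≠ 0 := by
    intro j hj
    rw [Matrix.det_diagonal] at hdetμ
    exact one_ne_zero ((Finset.prod_eq_zero (Finset.mem_univ j) hj) ▸ hdetμ).symm
  have hc : ∀ j, (0 : ℝ) < ‖μ j‖ ^ 2 :=
    fun j => pow_pos (norm_pos_iff.mpr (hμ j)) 2
  -- Dp arithmetic
  have hDpmul : ∀ α β, Dp α * Dp β = Dp (α + β) := by
    intro α β
    rw [hDp, hDp, hDp, Matrix.diagonal_mul_diagonal]
    apply congrArg Matrix.diagonal
    funext j
    rw [← Complex.ofReal_mul, ← Real.rpow_add (hc j)]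
  have hDp0 : Dp 0 = 1 := by
    rw [hDp]
    simp [Real.rpow_zero]
  have hDpinv : ∀ α, (Dp α)⁻¹ = Dp (-α) := fun α =>
    Matrix.inv_eq_right_inv (by rw [hDpmul, add_neg_cancel, hDp0])
  -- inverses
  have hQu : IsUnit Q.det := by rw [hQ]; exact isUnit_one
  have hQinv : ∀ X : Matrix (Fin n) (Fin n) ℂ, Q⁻¹ * (Q * X) = X := by
    intro X
    rw [← Matrix.mul_assoc, Matrix.nonsing_inv_mul Q hQu, one_mul]
  -- uniform formula for V
  have hVall : ∀ k : Fin N, V k = W k * Q * Dp (-(((N : ℝ) - 1 - (k : ℕ)) / (2 * N))) := by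
    intro k
    by_cases hk : (k : ℕ) < N - 1
    · exact hV k hk
    · have hkeq : (k : ℕ) = N - 1 := by have := k.isLt; omega
      have hVk : V k = Q := by
        rw [show k = ⟨N - 1, by omega⟩ from Fin.ext hkeq]; exact hVN
      rw [hVk, hkeq, hW1, one_mul]
      have he : (-(((N : ℝ) - 1 - ((N - 1 : ℕ) : ℝ)) / (2 * N))) = 0 := by
        rw [Nat.cast_sub hN]
        push_cast
        ring
      rw [he, hDp0, mul_one]
  intro k
  by_cases hk : (k : ℕ) < N - 1
  · rw [if_pos hk]
    have hN2 : 2 ≤ N := by omega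
    have hk1 : ((k + 1 : Fin N) : ℕ) = (k : ℕ) + 1 := by
      rw [Fin.val_add, Fin.val_one', Nat.mod_eq_of_lt (by omega : 1 < N),
        Nat.mod_eq_of_lt (by omega : (k : ℕ) + 1 < N)]
    have hWk : W (k : ℕ) = U k * W ((k : ℕ) + 1) := by
      have h := hW2 (k : ℕ) hk
      simpa using h
    have hWku : IsUnit (W (k : ℕ)).det := by
      rw [hWdet (N - 1 - (k : ℕ)) (k : ℕ) (by omega)]; exact isUnit_one
    have key : ∀ X : Matrix (Fin n) (Fin n) ℂ,
        U k * (W ((k : ℕ) + 1) * X) = W (k : ℕ) * X := by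
      intro X; rw [← Matrix.mul_assoc, ← hWk]
    have key2 : ∀ X : Matrix (Fin n) (Fin n) ℂ,
        (W (k : ℕ))⁻¹ * (W (k : ℕ) * X) = X := by
      intro X
      rw [← Matrix.mul_assoc, Matrix.nonsing_inv_mul _ hWku, one_mul]
    rw [hVall k, hVall (k + 1), hk1, Matrix.mul_inv_rev, Matrix.mul_inv_rev, hDpinv]
    simp only [Matrix.mul_assoc]
    rw [key, key2, hQinv, hDpmul]
    congr 1
    field_simp
    push_cast
    ring
  · rw [if_neg hk]
    have hkeq : (k : ℕ) = N - 1 := by have := k.isLt; omega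
    have hVk : V k = Q := by
      rw [show k = ⟨N - 1, by omega⟩ from Fin.ext hkeq]; exact hVN
    have hk1 : (k + 1 : Fin N) = 0 := by
      apply Fin.ext
      rw [Fin.val_add, Fin.val_one', Fin.val_zero, hkeq]
      rcases Nat.lt_or_ge 1 N with h | h
      · rw [Nat.mod_eq_of_lt h, Nat.sub_add_cancel hN, Nat.mod_self]
      · have hN1 : N = 1 := by omega
        subst hN1
        rfl
    have hdiag' : U k * W 0 = Q * Matrix.diagonal μ * Q⁻¹ := by
      rw [show k = ⟨N - 1, by omega⟩ from Fin.ext hkeq]; exact hdiag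
    have key : ∀ X : Matrix (Fin n) (Fin n) ℂ,
        U k * (W 0 * X) = Q * (Matrix.diagonal μ * (Q⁻¹ * X)) := by
      intro X
      rw [← Matrix.mul_assoc, hdiag']
      simp only [Matrix.mul_assoc]
    rw [hVk, hk1, hVall 0]
    simp only [Fin.val_zero, Nat.cast_zero, sub_zero]
    simp only [Matrix.mul_assoc]
    rw [key, hQinv, hQinv]
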